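/- Let δ : ℝ → ℝ be a strictly increasing homeomorphism with δ(x) > x for all x ∈ ℝ. Let G be a group, ρ : G → Homeo(ℝ) an action of G on ℝ by strictly increasing homeomorphisms each of which commutes with δ, and h : G → ℤ a map with h(γγ′) = h(γ) + h(γ′) for all γ, γ′ ∈ G. Suppose γ ∈ G and (x, y) ∈ ℝ² is a fixed point of the action of γ on ℝ² given by γ·(u, v) = (ρ(γ)(u), ρ(γ)(δ^{h(γ)}(v))), i.e. ρ(γ)(x) = x and ρ(γ)(δ^{h(γ)}(y)) = y, and suppose (x, y) lies on none of the graphs of the iterates of δ, i.e. y ≠ δᵏ(x) for every k ∈ ℤ. Then h(γ) = 0; consequently γ acts on ℝ² as the diagonal homeomorphism (u, v) ↦ (ρ(γ)(u), ρ(γ)(v)). -/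

import Mathlib

open Filter Topology

lemma pow_apply_eq_iterate' (δ : ℝ ≃ₜ ℝ) (m : ℕ) :
    ∀ w : ℝ, (δ.toEquiv ^ m) w = δ^[m] w := by
  induction m with
  | zero => intro w; simp
  | succ n ih =>
      intro w
      rw [pow_succ', Equiv.Perm.mul_apply, ih w, Function.iterate_succ_apply']
      rfl

lemma exists_iterate_gt' (δ : ℝ ≃ₜ ℝ) (hδ : ∀ x : ℝ, x < δ x) (z w : ℝ) :
    ∃ m : ℕ, z < δ^[m] w := by
  by_contra hcon
  push_neg at hcon
  have hmono : Monotone fun m : ℕ => δ^[m] w := monotone_nat_of_le_succ fun m => by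
    rw [Function.iterate_succ_apply']; exact (hδ _).le
  have hbdd : BddAbove (Set.range fun m : ℕ => δ^[m] w) :=
    ⟨z, by rintro _ ⟨m, rfl⟩; exact hcon m⟩
  have hlim := tendsto_atTop_ciSup hmono hbdd
  set L := ⨆ m : ℕ, δ^[m] w with hL
  have h2 : Tendsto (fun m : ℕ => δ^[m + 1] w) atTop (𝓝 L) :=
    hlim.comp (tendsto_add_atTop_nat 1)
  have h3 : Tendsto (fun m : ℕ => δ^[m + 1] w) atTop (𝓝 (δ L)) := by
    simpa [Function.iterate_succ_apply', Function.comp_def] using (δ.continuous.tendsto L).comp hlim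
  exact absurd (tendsto_nhds_unique h3 h2) (hδ L).ne'

lemma strictMono_zpow' (δ : ℝ ≃ₜ ℝ) (hδmono : StrictMono δ) (n : ℤ) :
    StrictMono ⇑(δ.toEquiv ^ n) := by
  have hnat : ∀ m : ℕ, StrictMono ⇑(δ.toEquiv ^ m) := by
    intro m
    have : StrictMono (δ^[m]) := hδmono.iterate m
    intro a b hab
    simpa [pow_apply_eq_iterate'] using this hab
  cases n with
  | ofNat m => simpa using hnat m
  | negSucc m =>
      intro a b hab
      have h1 := hnat (m + 1)
      have : (δ.toEquiv ^ (Int.negSucc m)) = (δ.toEquiv ^ (m + 1 : ℕ))⁻¹ := by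
        rw [Int.negSucc_eq, zpow_neg]
        norm_cast
      rw [this]
      rw [← h1.lt_iff_lt]
      simpa using hab



/-- A fixed point of `γ·(u,v) = (ρ γ u, ρ γ (δ^{h γ} v))` lying on no graph of
an iterate of `δ` forces `h(γ) = 0`, so `γ` acts diagonally. -/
theorem fixed_point_off_graphs_implies_diagonal
    {G : Type*} [Group G]
    (δ : ℝ ≃ₜ ℝ) (hδmono : StrictMono δ) (hδ : ∀ x : ℝ, x < δ x)
    (ρ : G → ℝ ≃ₜ ℝ)
    (hρ : ∀ γ γ' : G, ∀ x : ℝ, ρ (γ * γ') x = ρ γ (ρ γ' x))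
    (hρmono : ∀ γ : G, StrictMono (ρ γ))
    (hcomm : ∀ (γ : G) (x : ℝ), ρ γ (δ x) = δ (ρ γ x))
    (h : G → ℤ) (hh : ∀ γ γ' : G, h (γ * γ') = h γ + h γ')
    (γ : G) (x y : ℝ)
    (hfix₁ : ρ γ x = x)
    (hfix₂ : ρ γ ((δ.toEquiv ^ (h γ)) y) = y)
    (hoff : ∀ k : ℤ, y ≠ (δ.toEquiv ^ k) x) :
    h γ = 0 ∧ ∀ u v : ℝ, (ρ γ u, ρ γ ((δ.toEquiv ^ (h γ)) v)) = (ρ γ u, ρ γ v) := by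
  set n := h γ with hn
  -- commutation for zpow
  have hcommute : Commute δ.toEquiv (ρ γ).toEquiv := by
    ext z
    simp only [Equiv.Perm.mul_apply]
    exact (hcomm γ z).symm
  have hcommz : ∀ (k : ℤ) (z : ℝ), ρ γ ((δ.toEquiv ^ k) z) = (δ.toEquiv ^ k) (ρ γ z) := by
    intro k z
    have := (hcommute.zpow_left k).symm
    have := congrArg (fun e : Equiv.Perm ℝ => e z) this
    simpa [Equiv.Perm.mul_apply] using this
  set f : ℤ → ℝ := fun k => (δ.toEquiv ^ k) x with hf
  have fmono : StrictMono f := by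
    apply strictMono_int_of_lt_succ
    intro k
    have : f (k + 1) = (δ.toEquiv ^ k) (δ x) := by
      rw [hf]
      simp only [zpow_add_one, Equiv.Perm.mul_apply]
      rfl
    rw [this]
    exact strictMono_zpow' δ hδmono k (hδ x)
  -- interval location of y
  have hS : ∃ k : ℤ, f k < y ∧ y < f (k + 1) := by
    obtain ⟨m₁, hm₁⟩ := exists_iterate_gt' δ hδ x y
    obtain ⟨m₂, hm₂⟩ := exists_iterate_gt' δ hδ y x
    have hiter : ∀ (m : ℕ) (w : ℝ), (δ.toEquiv ^ (m : ℤ)) w = δ^[m] w := by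
      intro m w; rw [zpow_natCast]; exact pow_apply_eq_iterate' δ m w
    -- nonempty: f (-m₁) < y
    have hne : f (-(m₁ : ℤ)) < y := by
      have h1 : x < (δ.toEquiv ^ (m₁ : ℤ)) y := by rw [hiter]; exact hm₁
      have := strictMono_zpow' δ hδmono (-(m₁ : ℤ)) h1
      simpa [hf, ← Equiv.Perm.mul_apply, ← zpow_add] using this
    -- bounded above: ∀ k with f k ≤ y, k ≤ m₂
    have hbd : ∀ k : ℤ, f k ≤ y → k ≤ m₂ := by
      intro k hk
      by_contra hgt
      push_neg at hgt
      have : f (m₂ : ℤ) < f k := fmono hgt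
      have hym : y < f (m₂ : ℤ) := by
        show y < (δ.toEquiv ^ (m₂ : ℤ)) x
        rw [hiter]; exact hm₂
      exact absurd (hym.trans (this.trans_le hk)) (lt_irrefl y)
    obtain ⟨k, hk_mem, hk_max⟩ :=
      Int.exists_greatest_of_bdd (P := fun z => f z ≤ y) ⟨m₂, hbd⟩ ⟨-(m₁ : ℤ), hne.le⟩
    refine ⟨k, lt_of_le_of_ne hk_mem (fun heq => hoff k heq.symm), ?_⟩
    by_contra hle
    push_neg at hle
    exact absurd (hk_max (k + 1) hle) (by omega)
  obtain ⟨k, hk1, hk2⟩ := hS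
  -- ρ γ fixes each f j
  have hfixf : ∀ j : ℤ, ρ γ (f j) = f j := by
    intro j; rw [hf, hcommz, hfix₁]
  -- ρ γ y = δ^(-n) y
  have hρy : ρ γ y = (δ.toEquiv ^ (-n)) y := by
    have h1 : (δ.toEquiv ^ n) (ρ γ y) = y := by rw [← hcommz]; exact hfix₂
    have := congrArg (fun z => (δ.toEquiv ^ (-n)) z) h1
    simpa [← Equiv.Perm.mul_apply, ← zpow_add] using this
  -- apply ρ γ to hk1, hk2
  have hk1' : f k < (δ.toEquiv ^ (-n)) y := by
    have := hρmono γ hk1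
    rwa [hfixf, hρy] at this
  have hk2' : (δ.toEquiv ^ (-n)) y < f (k + 1) := by
    have := hρmono γ hk2
    rwa [hfixf, hρy] at this
  -- apply δ^n
  have hk1'' : f (n + k) < y := by
    have := strictMono_zpow' δ hδmono n hk1'
    have e1 : (δ.toEquiv ^ n) (f k) = f (n + k) := by
      show (δ.toEquiv ^ n) ((δ.toEquiv ^ k) x) = (δ.toEquiv ^ (n + k)) x
      rw [zpow_add, Equiv.Perm.mul_apply]
    have e2 : (δ.toEquiv ^ n) ((δ.toEquiv ^ (-n)) y) = y := by
      rw [← Equiv.Perm.mul_apply, ← zpow_add, add_neg_cancel]; rfl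
    rwa [e1, e2] at this
  have hk2'' : y < f (n + (k + 1)) := by
    have := strictMono_zpow' δ hδmono n hk2'
    have e1 : (δ.toEquiv ^ n) (f (k + 1)) = f (n + (k + 1)) := by
      show (δ.toEquiv ^ n) ((δ.toEquiv ^ (k + 1)) x) = (δ.toEquiv ^ (n + (k + 1))) x
      rw [zpow_add δ.toEquiv n (k + 1), Equiv.Perm.mul_apply]
    have e2 : (δ.toEquiv ^ n) ((δ.toEquiv ^ (-n)) y) = y := by
      rw [← Equiv.Perm.mul_apply, ← zpow_add, add_neg_cancel]; rfl
    rwa [e1, e2] at this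
  have hn0 : n = 0 := by
    have c1 : k < n + (k + 1) := fmono.lt_iff_lt.mp (hk1.trans hk2'')
    have c2 : n + k < k + 1 := fmono.lt_iff_lt.mp (hk1''.trans hk2)
    omega
  refine ⟨hn0, fun u v => ?_⟩
  rw [hn0]
  simp
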